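/- Let (X,d) be a compact metric space, let (x_i) and (x'_i) be sequences of points of X, and let (p_i) be a fast growing sequence. Write z = z((p_i),(x_i)) and z' = z((p_i),(x'_i)) for the Oxtoby sequences, and let f be a conjugacy from (O̅(z),S) to (O̅(z'),S). Suppose L((x'_i)) contains at least two points. Then there exists i₀ ∈ ℕ such that for all i ≥ i₀, all k ∈ ℤ and all j > i: if [k p_i, (k+1) p_i) ⊆ Per_{p_j}(z) then [k p_i, (k+1) p_i) ⊆ Per_{p_j}(f(z)). -/

import Mathlib

open Filter Topology

section Defs

variable {X : Type*}

/-- The shift by `m`: `(shiftZ m z) n = z (n + m)`, so `shiftZ 1` is the left shift `S`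
and `shiftZ m = S^m`. -/
def shiftZ (m : ℤ) (z : ℤ → X) : ℤ → X := fun n => z (n + m)

/-- `Per_p(z)`: the set of positions `n` such that `z m = z n` for all `m ≡ n (mod p)`. -/
def PerSet (p : ℕ) (z : ℤ → X) : Set ℤ :=
  {n : ℤ | ∀ m : ℤ, (p : ℤ) ∣ m - n → z m = z n}

/-- `Per(z) = ⋃_{p ≥ 1} Per_p(z)`. -/
def PerFull (z : ℤ → X) : Set ℤ := {n : ℤ | ∃ p : ℕ, 1 ≤ p ∧ n ∈ PerSet p z}

/-- A Toeplitz sequence: every position is periodic. -/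
def IsToeplitz (z : ℤ → X) : Prop := ∀ n : ℤ, n ∈ PerFull z

/-- A non-periodic sequence: `S^m z ≠ z` for all `m ≠ 0`. -/
def NonPeriodicSeq (z : ℤ → X) : Prop := ∀ m : ℤ, m ≠ 0 → shiftZ m z ≠ z

/-- `u` and `v` have the same `p`-skeleton. -/
def SamePSkeleton (p : ℕ) (u v : ℤ → X) : Prop :=
  PerSet p u = PerSet p v ∧ ∀ n ∈ PerSet p u, u n = v n

/-- A period structure of a (non-periodic) Toeplitz sequence `z`. -/
def IsPeriodStructure (p : ℕ → ℕ) (z : ℤ → X) : Prop :=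
  (∀ i, 1 ≤ p i) ∧
  (∀ i q, 1 ≤ q → q < p i → PerSet q z ≠ PerSet (p i) z) ∧
  (∀ i, p i ∣ p (i + 1)) ∧
  (∀ n : ℤ, ∃ i, n ∈ PerSet (p i) z)

/-- A fast growing sequence of positive integers. -/
def FastGrowing (p : ℕ → ℕ) : Prop :=
  p 0 = 1 ∧ (∀ i, p i ∣ p (i + 1)) ∧ 3 ≤ p 1 ∧ ∀ i, 3 * p i ≤ p (i + 1)

/-- `oxDefined p i` is the set of positions of the Oxtoby sequence that are filled in
after step `i` of the inductive construction (step `i+1` fills, for each `k ≡ 0` or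
`-1 (mod p_{i+1}/p_i)`, the still-empty positions `J(i,k)` of the block
`[k p_i, (k+1) p_i)`). -/
def oxDefined (p : ℕ → ℕ) : ℕ → Set ℤ
  | 0 => ∅
  | i + 1 =>
      oxDefined p i ∪
        {n : ℤ | ∃ k : ℤ,
          (((p (i + 1) / p i : ℕ) : ℤ) ∣ k ∨ ((p (i + 1) / p i : ℕ) : ℤ) ∣ (k + 1)) ∧
          k * (p i : ℤ) ≤ n ∧ n < (k + 1) * (p i : ℤ) ∧ n ∉ oxDefined p i}

/-- `J(i,k)`: the set of positions in `[k p_i, (k+1) p_i)` still undefined after step `i`. -/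
def oxJ (p : ℕ → ℕ) (i : ℕ) (k : ℤ) : Set ℤ :=
  {n : ℤ | k * (p i : ℤ) ≤ n ∧ n < (k + 1) * (p i : ℤ) ∧ n ∉ oxDefined p i}

/-- The Oxtoby sequence `z((p_i),(x_i))`: position `n` receives the value `x_i` where `i`
is the first step after which `n` is defined. -/
noncomputable def oxtoby (p : ℕ → ℕ) (x : ℕ → X) : ℤ → X :=
  fun n => x (sInf {i : ℕ | n ∈ oxDefined p i})

/-- The reverse of a bi-infinite sequence: `x⁻¹(n) = x(-n)`. -/
def revSeq (z : ℤ → X) : ℤ → X := fun n => z (-n)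

/-- `[n0, n1]` is a maximal `p`-periodic block in `x`. -/
def IsMaxPeriodicBlock (p : ℕ) (x : ℤ → X) (n0 n1 : ℤ) : Prop :=
  n0 ≤ n1 ∧ Set.Icc n0 n1 ⊆ PerSet p x ∧
    ∀ n0' n1' : ℤ, n0' ≤ n0 → n1 ≤ n1' → Set.Icc n0' n1' ⊆ PerSet p x →
      n0' = n0 ∧ n1' = n1

variable [TopologicalSpace X]

/-- The orbit closure of `z` in `X^ℤ` with the product topology. -/
def orbitClosure (z : ℤ → X) : Set (ℤ → X) :=
  closure {y : ℤ → X | ∃ m : ℤ, y = shiftZ m z}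

/-- The ω-limit set of a sequence: all limits of convergent subsequences. -/
def omegaLimitSet (x : ℕ → X) : Set X :=
  {a : X | ∃ φ : ℕ → ℕ, StrictMono φ ∧ Tendsto (x ∘ φ) atTop (𝓝 a)}

/-- Two sequences have the same topological type if exactly the same subsequences
converge. -/
def SameTopType {Y : Type*} [TopologicalSpace Y] (x : ℕ → X) (y : ℕ → Y) : Prop :=
  ∀ φ : ℕ → ℕ, StrictMono φ →
    ((∃ a, Tendsto (x ∘ φ) atTop (𝓝 a)) ↔ (∃ a, Tendsto (y ∘ φ) atTop (𝓝 a)))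

/-- `f` is a conjugacy between the shift-invariant sets `A` and `B`: a homeomorphism
from `A` onto `B` commuting with the shift. -/
def IsConjugacy (A B : Set (ℤ → X)) (f : (ℤ → X) → (ℤ → X)) : Prop :=
  Set.MapsTo f A B ∧ ContinuousOn f A ∧
    (∃ g : (ℤ → X) → (ℤ → X), Set.MapsTo g B A ∧ ContinuousOn g B ∧
      (∀ a ∈ A, g (f a) = a) ∧ (∀ b ∈ B, f (g b) = b)) ∧
    ∀ a ∈ A, f (shiftZ 1 a) = shiftZ 1 (f a)

/-- The `m`-th iterate (for `m : ℤ`) of a self-homeomorphism. -/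
def iterZ {Y : Type*} [TopologicalSpace Y] (f : Y ≃ₜ Y) (m : ℤ) (a : Y) : Y :=
  ((f.toEquiv ^ m : Equiv.Perm Y)) a

end Defs
section Combinatorics

open Finset

variable {p : ℕ → ℕ}

/-- partial sums of `p` -/
noncomputable def oxS (p : ℕ → ℕ) (i : ℕ) : ℤ := ∑ l ∈ Finset.range i, (p l : ℤ)

/-- the basic filled window at scale `l` -/
def oxW (p : ℕ → ℕ) (l : ℕ) : Set ℤ :=
  {n : ℤ | ∃ c : ℤ, c * (p (l+1) : ℤ) - (p l : ℤ) ≤ n ∧ n < c * (p (l+1) : ℤ) + (p l : ℤ)}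

lemma FastGrowing.pos (hp : FastGrowing p) : ∀ i, 0 < p i := by
  intro i
  induction i with
  | zero => rw [hp.1]; norm_num
  | succ n ih => have := hp.2.2.2 n; omega

lemma FastGrowing.ratio (hp : FastGrowing p) (i : ℕ) : 3 * p i ≤ p (i+1) := hp.2.2.2 i

lemma FastGrowing.mono (hp : FastGrowing p) : Monotone p := by
  apply monotone_nat_of_le_succ
  intro n
  have := hp.2.2.2 n; have := hp.pos n; omega

lemma FastGrowing.dvd (hp : FastGrowing p) {i j : ℕ} (h : i ≤ j) : p i ∣ p j := by
  induction j with
  | zero => simpa [Nat.le_zero.mp h] using dvd_refl (p 0)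
  | succ n ih =>
    rcases Nat.lt_or_ge i (n+1) with h' | h'
    · exact (ih (by omega)).trans (hp.2.1 n)
    · have : i = n + 1 := le_antisymm h h'
      simp [this]

lemma FastGrowing.dvdZ (hp : FastGrowing p) {i j : ℕ} (h : i ≤ j) :
    (p i : ℤ) ∣ (p j : ℤ) := Int.natCast_dvd_natCast.mpr (hp.dvd h)

lemma FastGrowing.lin_le (hp : FastGrowing p) (i : ℕ) : i + 1 ≤ p i := by
  induction i with
  | zero => simp [hp.1]
  | succ n ih => have := hp.2.2.2 n; omega

lemma oxS_zero : oxS p 0 = 0 := by simp [oxS]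

lemma oxS_succ (i : ℕ) : oxS p (i+1) = oxS p i + (p i : ℤ) := by
  simp [oxS, Finset.sum_range_succ]

lemma oxS_nonneg (i : ℕ) : 0 ≤ oxS p i := by
  apply Finset.sum_nonneg; intro l _; positivity

lemma oxS_mono (hp : FastGrowing p) {i j : ℕ} (h : i ≤ j) : oxS p i ≤ oxS p j := by
  unfold oxS
  apply Finset.sum_le_sum_of_subset_of_nonneg (Finset.range_subset_range.mpr h)
  intro l _ _; positivity

lemma two_oxS_lt (hp : FastGrowing p) (i : ℕ) : 2 * oxS p i < (p i : ℤ) := by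
  induction i with
  | zero => simp [oxS_zero, hp.1]
  | succ n ih =>
    have h3 : (3 : ℤ) * p n ≤ p (n+1) := by exact_mod_cast hp.ratio n
    rw [oxS_succ]; linarith

lemma dvd_oxS_sub (hp : FastGrowing p) {i j : ℕ} (h : i ≤ j) :
    (p i : ℤ) ∣ oxS p j - oxS p i := by
  have : oxS p j - oxS p i = ∑ l ∈ Finset.Ico i j, (p l : ℤ) := by
    rw [Finset.sum_Ico_eq_sub _ h]; rfl
  rw [this]
  apply Finset.dvd_sum
  intro l hl
  exact hp.dvdZ (Finset.mem_Ico.mp hl).1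

lemma oxW_of_near {l : ℕ} {c n : ℤ}
    (h1 : c * (p (l+1) : ℤ) - (p l : ℤ) ≤ n) (h2 : n < c * (p (l+1) : ℤ) + (p l : ℤ)) :
    n ∈ oxW p l := ⟨c, h1, h2⟩

lemma oxW_shift {l : ℕ} {n d : ℤ} (hd : ((p (l+1) : ℤ)) ∣ d) (h : n ∈ oxW p l) :
    n + d ∈ oxW p l := by
  obtain ⟨c, h1, h2⟩ := h
  obtain ⟨t, rfl⟩ := hd
  exact ⟨c + t, by ring_nf; ring_nf at h1 h2 ⊢; linarith, by linarith [h2]⟩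

lemma not_oxW_of (hp : FastGrowing p) {l : ℕ} {n v : ℤ}
    (hv1 : (p l : ℤ) ≤ v) (hv2 : v < (p (l+1) : ℤ) - (p l : ℤ))
    (hdvd : ((p (l+1) : ℤ)) ∣ n - v) : n ∉ oxW p l := by
  rintro ⟨c, h1, h2⟩
  obtain ⟨t, ht⟩ := hdvd
  have hPpos : (0:ℤ) < (p (l+1) : ℤ) := by exact_mod_cast hp.pos (l+1)
  have hn : n = v + t * (p (l+1) : ℤ) := by linarith
  have hring : (c - t) * (p (l+1) : ℤ) = c * (p (l+1) : ℤ) - t * (p (l+1) : ℤ) := by ring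
  have hA : (c - t) * (p (l+1) : ℤ) ≤ v + (p l : ℤ) := by rw [hn] at h1; linarith
  have hB : v < (c - t) * (p (l+1) : ℤ) + (p l : ℤ) := by rw [hn] at h2; linarith
  have hvP : v + (p l : ℤ) < (p (l+1) : ℤ) := by linarith
  have hct : c - t ≤ 0 := by
    by_contra hh
    push_neg at hh
    have : (p (l+1) : ℤ) ≤ (c - t) * (p (l+1) : ℤ) := le_mul_of_one_le_left hPpos.le hh
    linarith
  have : (c - t) * (p (l+1) : ℤ) ≤ 0 := mul_nonpos_of_nonpos_of_nonneg hct hPpos.le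
  linarith

/-- characterization of `oxDefined` -/
lemma oxDefined_eq (hp : FastGrowing p) (j : ℕ) :
    oxDefined p j = {n : ℤ | ∃ l < j, n ∈ oxW p l} := by
  induction j with
  | zero => simp [oxDefined]
  | succ i ih =>
    have hq : ((p (i+1) / p i : ℕ) : ℤ) * (p i : ℤ) = (p (i+1) : ℤ) := by
      exact_mod_cast congrArg (Nat.cast : ℕ → ℤ) (Nat.div_mul_cancel (hp.2.1 i))
    have hpi : (0:ℤ) < (p i : ℤ) := by exact_mod_cast hp.pos i
    ext n
    simp only [oxDefined, Set.mem_union, Set.mem_setOf_eq]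
    constructor
    · rintro (h | ⟨k, hk, hk1, hk2, hk3⟩)
      · rw [ih] at h
        obtain ⟨l, hl, hW⟩ := h
        exact ⟨l, by omega, hW⟩
      · refine ⟨i, by omega, ?_⟩
        rcases hk with ⟨c, rfl⟩ | ⟨c, hc⟩
        · have hcP : c * (p (i+1) : ℤ) = ((p (i+1) / p i : ℕ) : ℤ) * c * (p i : ℤ) := by
            rw [← hq]; ring
          have hk2' : n < (((p (i+1) / p i : ℕ) : ℤ) * c + 1) * (p i : ℤ) := hk2
          refine ⟨c, by rw [hcP]; linarith, by rw [hcP]; nlinarith [hk2']⟩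
        · have hcP : c * (p (i+1) : ℤ) = (k + 1) * (p i : ℤ) := by
            rw [← hq, hc]; ring
          refine ⟨c, by rw [hcP]; nlinarith [hk1], by rw [hcP]; nlinarith [hk2]⟩
    · rintro ⟨l, hl, hW⟩
      rcases Nat.lt_or_ge l i with hli | hli
      · left; rw [ih]; exact ⟨l, hli, hW⟩
      · have hli2 : l = i := by omega
        rw [hli2] at hW
        by_cases hD : n ∈ oxDefined p i
        · left; exact hD
        · right
          obtain ⟨c, h1, h2⟩ := hW
          have hqc : (((p (i+1) / p i : ℕ) : ℤ) * c) * (p i : ℤ) = c * (p (i+1) : ℤ) := by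
            rw [← hq]; ring
          rcases le_or_gt (c * (p (i+1) : ℤ)) n with hcase | hcase
          · refine ⟨((p (i+1) / p i : ℕ) : ℤ) * c, Or.inl ⟨c, rfl⟩, ?_, ?_, hD⟩
            · rw [hqc]; exact hcase
            · nlinarith [hqc]
          · refine ⟨((p (i+1) / p i : ℕ) : ℤ) * c - 1, Or.inr ⟨c, by ring⟩, ?_, ?_, hD⟩
            · nlinarith [hqc]
            · nlinarith [hqc]

lemma oxDefined_mono (i : ℕ) : ∀ {j : ℕ}, i ≤ j → oxDefined p i ⊆ oxDefined p j := by
  intro j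
  induction j with
  | zero => intro h; simp [Nat.le_zero.mp h]
  | succ n ih =>
    intro h
    rcases Nat.lt_or_ge i (n+1) with h' | h'
    · exact (ih (by omega)).trans (by intro n hn; exact Or.inl hn)
    · have : i = n + 1 := by omega
      subst this; exact subset_rfl

lemma mem_oxDefined_of_near (hp : FastGrowing p) {l j : ℕ} (hlj : l < j) {c n : ℤ}
    (h1 : c * (p (l+1) : ℤ) - (p l : ℤ) ≤ n) (h2 : n < c * (p (l+1) : ℤ) + (p l : ℤ)) :
    n ∈ oxDefined p j := by
  rw [oxDefined_eq hp]; exact ⟨l, hlj, oxW_of_near h1 h2⟩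

lemma oxDefined_shift (hp : FastGrowing p) {j : ℕ} {n d : ℤ} (hd : ((p j : ℤ)) ∣ d) :
    n + d ∈ oxDefined p j ↔ n ∈ oxDefined p j := by
  have key : ∀ m d' : ℤ, ((p j : ℤ)) ∣ d' → m ∈ oxDefined p j → m + d' ∈ oxDefined p j := by
    intro m d' hd' hm
    rw [oxDefined_eq hp] at hm ⊢
    obtain ⟨l, hl, hW⟩ := hm
    exact ⟨l, hl, oxW_shift ((hp.dvdZ (by omega : l + 1 ≤ j)).trans hd') hW⟩
  constructor
  · intro h
    have := key (n + d) (-d) (by simpa using hd.neg_right) h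
    simpa using this
  · intro h; exact key n d hd h

lemma run_subset (hp : FastGrowing p) :
    ∀ (μ : ℕ) {j : ℕ}, μ ≤ j → ∀ {m n : ℤ}, ((p μ : ℤ)) ∣ m →
      m - oxS p μ ≤ n → n < m + oxS p μ → n ∈ oxDefined p j := by
  intro μ
  induction μ with
  | zero =>
    intro j _ m n _ h1 h2
    rw [oxS_zero] at h1 h2; omega
  | succ ν ih =>
    intro j hj m n hm h1 h2
    rw [oxS_succ] at h1 h2
    rcases le_or_gt (m + (p ν : ℤ)) n with hc1 | hc1
    · -- right part
      exact ih (by omega) (dvd_add (hp.dvdZ (by omega : ν ≤ ν + 1)|>.trans hm) ⟨1, by ring⟩)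
        (by linarith) (by linarith)
    rcases le_or_gt (m - (p ν : ℤ)) n with hc2 | hc2
    · -- center window
      obtain ⟨c, rfl⟩ := hm
      have : c * (p (ν+1) : ℤ) = (p (ν+1) : ℤ) * c := by ring
      exact mem_oxDefined_of_near hp (by omega : ν < j) (c := c) (by linarith [this]) (by linarith [this])
    · -- left part
      exact ih (by omega) (dvd_sub (hp.dvdZ (by omega : ν ≤ ν + 1)|>.trans hm) ⟨1, by ring⟩)
        (by linarith) (by linarith)

lemma oxS_not_mem (hp : FastGrowing p) (j : ℕ) : oxS p j ∉ oxDefined p j := by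
  rw [oxDefined_eq hp]
  rintro ⟨l, hl, hW⟩
  refine not_oxW_of hp (v := oxS p (l+1)) ?_ ?_ ?_ hW
  · rw [oxS_succ]; linarith [oxS_nonneg (p := p) l]
  · have h2S := two_oxS_lt hp (l+1)
    have : oxS p (l+1) + (p l : ℤ) ≤ 2 * oxS p (l+1) := by
      rw [oxS_succ]; linarith [oxS_nonneg (p := p) l]
    linarith
  · exact dvd_oxS_sub hp (by omega)

lemma oxDefined_symm (hp : FastGrowing p) {j : ℕ} {n : ℤ} (h : n ∈ oxDefined p j) :
    -1 - n ∈ oxDefined p j := by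
  rw [oxDefined_eq hp] at h ⊢
  obtain ⟨l, hl, c, h1, h2⟩ := h
  exact ⟨l, hl, -c, by push_cast; linarith, by push_cast; linarith⟩

lemma neg_oxS_not_mem (hp : FastGrowing p) (j : ℕ) : -(oxS p j) - 1 ∉ oxDefined p j := by
  intro h
  have := oxDefined_symm hp h
  have heq : -1 - (-(oxS p j) - 1) = oxS p j := by ring
  rw [heq] at this
  exact oxS_not_mem hp j this

/-- every interval inside `oxDefined p j` lies in a "run" -/
lemma interval_in_run (hp : FastGrowing p) :
    ∀ (j : ℕ) (α β : ℤ), α ≤ β → (∀ n, α ≤ n → n ≤ β → n ∈ oxDefined p j) →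
    ∃ (μ : ℕ) (m : ℤ), 1 ≤ μ ∧ μ ≤ j ∧ ((p μ : ℤ)) ∣ m ∧ m - oxS p μ ≤ α ∧ β < m + oxS p μ := by
  intro j
  induction j with
  | zero =>
    intro α β hαβ h
    exact absurd (h α le_rfl hαβ) (by simp [oxDefined])
  | succ i ih =>
    intro α β hαβ h
    by_cases hsub : ∀ n, α ≤ n → n ≤ β → n ∈ oxDefined p i
    · obtain ⟨μ, m, hμ1, hμ2, hmd, hr1, hr2⟩ := ih α β hαβ hsub
      exact ⟨μ, m, hμ1, by omega, hmd, hr1, hr2⟩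
    · push_neg at hsub
      obtain ⟨n₀, hn₀1, hn₀2, hn₀3⟩ := hsub
      have hn₀D : n₀ ∈ oxDefined p (i+1) := h n₀ hn₀1 hn₀2
      have hq : ((p (i+1) / p i : ℕ) : ℤ) * (p i : ℤ) = (p (i+1) : ℤ) := by
        exact_mod_cast congrArg (Nat.cast : ℕ → ℤ) (Nat.div_mul_cancel (hp.2.1 i))
      -- extract the center
      have hctr : ∃ m : ℤ, ((p (i+1) : ℤ)) ∣ m ∧ m - (p i : ℤ) ≤ n₀ ∧ n₀ < m + (p i : ℤ) := by
        rcases hn₀D with hD | ⟨k, hk, hk1, hk2, _⟩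
        · exact absurd hD hn₀3
        rcases hk with ⟨c, rfl⟩ | ⟨c, hc⟩
        · refine ⟨c * (p (i+1) : ℤ), ⟨c, by ring⟩, ?_, ?_⟩
          · have : c * (p (i+1) : ℤ) = ((p (i+1) / p i : ℕ) : ℤ) * c * (p i : ℤ) := by
              rw [← hq]; ring
            have hpi : (0:ℤ) < (p i : ℤ) := by exact_mod_cast hp.pos i
            rw [this]; linarith
          · have : c * (p (i+1) : ℤ) = ((p (i+1) / p i : ℕ) : ℤ) * c * (p i : ℤ) := by
              rw [← hq]; ring
            rw [this]; nlinarith [hk2]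
        · refine ⟨c * (p (i+1) : ℤ), ⟨c, by ring⟩, ?_, ?_⟩
          · have : c * (p (i+1) : ℤ) = (k + 1) * (p i : ℤ) := by rw [← hq, hc]; ring
            rw [this]; nlinarith [hk1]
          · have : c * (p (i+1) : ℤ) = (k + 1) * (p i : ℤ) := by rw [← hq, hc]; ring
            have hpi : (0:ℤ) < (p i : ℤ) := by exact_mod_cast hp.pos i
            rw [this]; nlinarith [hk2]
      obtain ⟨m, hmd, hm1, hm2⟩ := hctr
      have hSpi : (p i : ℤ) ≤ oxS p (i+1) := by
        rw [oxS_succ]; linarith [oxS_nonneg (p := p) i]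
      refine ⟨i+1, m, by omega, le_rfl, hmd, ?_, ?_⟩
      · by_contra hcon
        push_neg at hcon
        have hg : α ≤ m - oxS p (i+1) - 1 := by omega
        have hgle : m - oxS p (i+1) - 1 ≤ β := by
          have : m - oxS p (i+1) - 1 < n₀ := by linarith
          omega
        have := h (m - oxS p (i+1) - 1) hg hgle
        have hshift : (m - oxS p (i+1) - 1) = (-(oxS p (i+1)) - 1) + m := by ring
        rw [hshift, oxDefined_shift hp hmd] at this
        exact neg_oxS_not_mem hp (i+1) this
      · by_contra hcon
        push_neg at hcon
        have hg : m + oxS p (i+1) ≤ β := hcon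
        have hgge : α ≤ m + oxS p (i+1) := by linarith
        have := h (m + oxS p (i+1)) hgge hg
        have hshift : (m + oxS p (i+1)) = oxS p (i+1) + m := by ring
        rw [hshift, oxDefined_shift hp hmd] at this
        exact oxS_not_mem hp (i+1) this

/-- CRT-type lemma: every residue class mod `p j` avoiding `oxDefined p j` contains
elements of every exact level `ν+1 > j`. -/
lemma exists_level (hp : FastGrowing p) {j ν : ℕ} (hν : j ≤ ν) {r : ℤ}
    (hr : r ∉ oxDefined p j) :
    ∃ m : ℤ, ((p j : ℤ)) ∣ m - r ∧ m ∈ oxDefined p (ν+1) ∧ m ∉ oxDefined p ν := by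
  have hpj : (0:ℤ) < (p j : ℤ) := by exact_mod_cast hp.pos j
  set r₀ : ℤ := r % (p j : ℤ) with hr₀def
  have hr₀0 : 0 ≤ r₀ := Int.emod_nonneg r (by positivity)
  have hr₀1 : r₀ < (p j : ℤ) := Int.emod_lt_of_pos r hpj
  have hdvd0 : ((p j : ℤ)) ∣ r₀ - r :=
    ⟨-(r / (p j : ℤ)), by rw [hr₀def, Int.emod_def]; ring⟩
  have hr₀D : r₀ ∉ oxDefined p j := by
    intro hmem
    apply hr
    have : r = r₀ + (r - r₀) := by ring
    rw [this, oxDefined_shift hp (by simpa using hdvd0.neg_right : ((p j : ℤ)) ∣ r - r₀)]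
    exact hmem
  refine ⟨r₀ + (oxS p ν - oxS p j), ?_, ?_, ?_⟩
  · have : r₀ + (oxS p ν - oxS p j) - r = (r₀ - r) + (oxS p ν - oxS p j) := by ring
    rw [this]
    exact dvd_add hdvd0 (dvd_oxS_sub hp hν)
  · -- in D_{ν+1} : lies in [0, p ν)
    have hm0 : 0 ≤ r₀ + (oxS p ν - oxS p j) := by
      have := oxS_mono hp hν; linarith
    have hmlt : r₀ + (oxS p ν - oxS p j) < (p ν : ℤ) := by
      rcases Nat.eq_or_lt_of_le hν with rfl | hlt
      · simpa using hr₀1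
      · have hpjS : (p j : ℤ) ≤ oxS p ν := by
          have h1 : oxS p (j+1) ≤ oxS p ν := oxS_mono hp hlt
          rw [oxS_succ] at h1
          linarith [oxS_nonneg (p := p) j]
        have h2S := two_oxS_lt hp ν
        linarith [oxS_nonneg (p := p) j]
    have := mem_oxDefined_of_near hp (by omega : ν < ν + 1) (c := 0)
      (n := r₀ + (oxS p ν - oxS p j)) (by simpa using by linarith : 0 * (p (ν+1) : ℤ) - (p ν : ℤ) ≤ r₀ + (oxS p ν - oxS p j)) (by simpa using by linarith)
    exact this
  · -- not in D_ν
    rw [oxDefined_eq hp]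
    rintro ⟨l, hl, hW⟩
    rcases Nat.lt_or_ge l j with hlj | hlj
    · -- transfer to r and contradict hr
      apply hr
      have hdl : ((p (l+1) : ℤ)) ∣ r - (r₀ + (oxS p ν - oxS p j)) := by
        have h1 : ((p j : ℤ)) ∣ r - (r₀ + (oxS p ν - oxS p j)) := by
          have : r - (r₀ + (oxS p ν - oxS p j)) = -((r₀ - r) + (oxS p ν - oxS p j)) := by ring
          rw [this]
          exact (dvd_add hdvd0 (dvd_oxS_sub hp hν)).neg_right
        exact (hp.dvdZ (by omega : l + 1 ≤ j)).trans h1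
      have := oxW_shift hdl hW
      rw [oxDefined_eq hp]
      exact ⟨l, hlj, by simpa using this⟩
    · -- j ≤ l < ν : use the gap value v
      have hpl : (0:ℤ) < (p l : ℤ) := by exact_mod_cast hp.pos l
      have h3l : (3:ℤ) * (p l : ℤ) ≤ (p (l+1) : ℤ) := by exact_mod_cast hp.ratio l
      refine not_oxW_of hp (v := r₀ + (oxS p (l+1) - oxS p j)) ?_ ?_ ?_ hW
      · have hSl : oxS p j ≤ oxS p l := oxS_mono hp hlj
        rw [oxS_succ]; linarith
      · rcases Nat.eq_or_lt_of_le hlj with heq | hlt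
        · have hSeq : oxS p l = oxS p j := by rw [heq]
          have hpeq : (p l : ℤ) = (p j : ℤ) := by rw [heq]
          rw [oxS_succ]
          linarith
        · have hpjS : (p j : ℤ) ≤ oxS p l := by
            have h1 : oxS p (j+1) ≤ oxS p l := oxS_mono hp hlt
            rw [oxS_succ] at h1
            linarith [oxS_nonneg (p := p) j]
          have h2S := two_oxS_lt hp l
          rw [oxS_succ]
          linarith [oxS_nonneg (p := p) j]
      · have : (r₀ + (oxS p ν - oxS p j)) - (r₀ + (oxS p (l+1) - oxS p j)) = oxS p ν - oxS p (l+1) := by ring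
        rw [this]
        exact dvd_oxS_sub hp (by omega)

lemma oxDefined_exists (hp : FastGrowing p) (n : ℤ) : ∃ j, n ∈ oxDefined p j := by
  have h1 : (n.natAbs : ℤ) + 1 ≤ (p n.natAbs : ℤ) := by exact_mod_cast hp.lin_le n.natAbs
  refine ⟨n.natAbs + 1, mem_oxDefined_of_near hp (by omega : n.natAbs < n.natAbs + 1) (c := 0)
    (by simp only [zero_mul, zero_sub]; omega) (by simp only [zero_mul, zero_add]; omega)⟩

lemma exists_exact_level (hp : FastGrowing p) (n : ℤ) :
    ∃ ν : ℕ, n ∈ oxDefined p (ν+1) ∧ n ∉ oxDefined p ν := by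
  have hex := oxDefined_exists hp n
  classical
  let j₀ := Nat.find hex
  have hj₀ : n ∈ oxDefined p j₀ := Nat.find_spec hex
  have hj₀ne : j₀ ≠ 0 := by
    intro h
    rw [h] at hj₀
    simp [oxDefined] at hj₀
  obtain ⟨ν, hν⟩ : ∃ ν, j₀ = ν + 1 := ⟨j₀ - 1, by omega⟩
  refine ⟨ν, by rw [← hν]; exact hj₀, ?_⟩
  have := Nat.find_min hex (m := ν) (by omega)
  exact this

lemma oxtoby_apply {X : Type*} (x : ℕ → X) {n : ℤ} {ν : ℕ}
    (h1 : n ∈ oxDefined p (ν+1)) (h2 : n ∉ oxDefined p ν) :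
    oxtoby p x n = x (ν+1) := by
  have hne : {i : ℕ | n ∈ oxDefined p i}.Nonempty := ⟨ν+1, h1⟩
  have hmem := Nat.sInf_mem hne
  have hle : sInf {i : ℕ | n ∈ oxDefined p i} ≤ ν + 1 := Nat.sInf_le h1
  have hge : ν + 1 ≤ sInf {i : ℕ | n ∈ oxDefined p i} := by
    by_contra hcon
    push_neg at hcon
    have : sInf {i : ℕ | n ∈ oxDefined p i} ≤ ν := by omega
    exact h2 (oxDefined_mono _ this hmem)
  have : sInf {i : ℕ | n ∈ oxDefined p i} = ν + 1 := le_antisymm hle hge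
  simp only [oxtoby, this]

lemma oxDefined_subset_perSet (hp : FastGrowing p) {X : Type*} (x : ℕ → X) (j : ℕ) :
    oxDefined p j ⊆ PerSet (p j) (oxtoby p x) := by
  intro n hn
  intro m hm
  obtain ⟨ν, hν1, hν2⟩ := exists_exact_level hp n
  have hνj : ν + 1 ≤ j := by
    by_contra hcon
    push_neg at hcon
    exact hν2 (oxDefined_mono _ (by omega) hn)
  have hm1 : m ∈ oxDefined p (ν+1) := by
    have : m = n + (m - n) := by ring
    rw [this, oxDefined_shift hp ((hp.dvdZ hνj).trans hm)]
    exact hν1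
  have hm2 : m ∉ oxDefined p ν := by
    intro hmem
    apply hν2
    have : n = m + (n - m) := by ring
    rw [this, oxDefined_shift hp ((hp.dvdZ (by omega : ν ≤ j)).trans (by simpa using hm.neg_right : ((p j : ℤ)) ∣ n - m))]
    exact hmem
  rw [oxtoby_apply x hν1 hν2, oxtoby_apply x hm1 hm2]

end Combinatorics
section Dynamics

variable {X : Type*} [MetricSpace X]

lemma shiftZ_comp (a b : ℤ) (z : ℤ → X) : shiftZ a (shiftZ b z) = shiftZ (a + b) z := by
  funext n; simp [shiftZ, add_assoc]

lemma shiftZ_zero' (z : ℤ → X) : shiftZ 0 z = z := by funext n; simp [shiftZ]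

lemma continuous_shiftZ (m : ℤ) : Continuous (shiftZ m : (ℤ → X) → (ℤ → X)) := by
  apply continuous_pi; intro n; exact continuous_apply (n + m)

lemma self_mem_orbitClosure (z : ℤ → X) : z ∈ orbitClosure z :=
  subset_closure ⟨0, (shiftZ_zero' z).symm⟩

lemma shiftZ_mem_orbitClosure {z u : ℤ → X} (m : ℤ) (hu : u ∈ orbitClosure z) :
    shiftZ m u ∈ orbitClosure z := by
  refine map_mem_closure (continuous_shiftZ m) hu ?_
  rintro y ⟨m', rfl⟩
  exact ⟨m + m', (shiftZ_comp m m' z)⟩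

lemma periodic_of_shift {u : ℤ → X} {P : ℤ} (h : shiftZ P u = u) {m n : ℤ} (hd : P ∣ m - n) :
    u m = u n := by
  have hpt : ∀ n, u (n + P) = u n := fun n => congrFun h n
  have key : ∀ t : ℤ, ∀ n, u (n + t * P) = u n := by
    intro t
    induction t using Int.induction_on with
    | zero => simp
    | succ i ih =>
      intro n
      have h1 : n + ((i:ℤ)+1)*P = (n + P) + (i:ℤ) * P := by ring
      rw [h1, ih (n + P), hpt n]
    | pred i ih =>
      intro n
      have h1 : n + (-(i:ℤ)-1)*P = (n - P) + (-(i:ℤ)) * P := by ring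
      rw [h1, ih (n - P)]
      have := hpt (n - P)
      simpa using this.symm
  obtain ⟨t, ht⟩ := hd
  have : m = n + t * P := by rw [mul_comm]; omega
  rw [this, key t n]

lemma conj_shift_comm {z z' : ℤ → X} {f : (ℤ → X) → (ℤ → X)}
    (hf : IsConjugacy (orbitClosure z) (orbitClosure z') f) :
    ∀ (m : ℤ) (a : ℤ → X), a ∈ orbitClosure z → f (shiftZ m a) = shiftZ m (f a) := by
  intro m
  induction m using Int.induction_on with
  | zero => intro a _; rw [shiftZ_zero', shiftZ_zero']
  | succ i ih =>
    intro a ha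
    have h1 : shiftZ ((i:ℤ)+1) a = shiftZ 1 (shiftZ (i:ℤ) a) := by
      rw [shiftZ_comp]; congr 1; ring
    rw [h1, hf.2.2.2 _ (shiftZ_mem_orbitClosure _ ha), ih a ha, shiftZ_comp]
    congr 1; ring
  | pred i ih =>
    intro a ha
    have ha' : shiftZ (-(i:ℤ)-1) a ∈ orbitClosure z := shiftZ_mem_orbitClosure _ ha
    have key := hf.2.2.2 _ ha'
    have h1 : shiftZ 1 (shiftZ (-(i:ℤ)-1) a) = shiftZ (-(i:ℤ)) a := by
      rw [shiftZ_comp]; congr 1; ring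
    rw [h1, ih a ha] at key
    have h2 := congrArg (shiftZ (-1)) key
    rw [shiftZ_comp, shiftZ_comp] at h2
    have h3 : (-1 + -(i:ℤ)) = -(i:ℤ)-1 := by ring
    have h4 : (-1 + 1 : ℤ) = 0 := by ring
    rw [h3, h4, shiftZ_zero'] at h2
    exact h2.symm

lemma window_code [CompactSpace X] {A : Set (ℤ → X)} (hA : IsClosed A)
    {F : (ℤ → X) → X} (hF : ContinuousOn F A) {ε : ℝ} (hε : 0 < ε) :
    ∃ N : ℕ, ∀ u ∈ A, ∀ v ∈ A, (∀ n : ℤ, |n| ≤ (N:ℤ) → u n = v n) → dist (F u) (F v) ≤ ε := by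
  by_contra hcon
  push_neg at hcon
  choose u hu v hv hagree hdist using hcon
  have hAcomp : IsCompact A := hA.isCompact
  obtain ⟨a, ha, φ, hφ, hta⟩ := hAcomp.isSeqCompact (fun N => hu N)
  have hv' : ∀ k, v (φ k) ∈ A := fun k => hv (φ k)
  obtain ⟨b, hb, ψ, hψ, htb⟩ := hAcomp.isSeqCompact hv'
  have hta' : Filter.Tendsto (fun k => u (φ (ψ k))) Filter.atTop (nhds a) :=
    hta.comp hψ.tendsto_atTop
  -- a = b
  have hab : a = b := by
    funext n
    have h1 : Filter.Tendsto (fun k => u (φ (ψ k)) n) Filter.atTop (nhds (a n)) :=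
      (tendsto_pi_nhds.mp hta' n)
    have h2 : Filter.Tendsto (fun k => v (φ (ψ k)) n) Filter.atTop (nhds (b n)) :=
      (tendsto_pi_nhds.mp htb n)
    refine tendsto_nhds_unique (h1.congr' ?_) h2
    filter_upwards [Filter.eventually_ge_atTop n.natAbs] with k hk
    apply hagree
    have : k ≤ φ (ψ k) := le_trans (hψ.id_le k) (hφ.id_le (ψ k))
    rw [Int.abs_eq_natAbs]
    omega
  -- contradiction with continuity
  have hFa : Filter.Tendsto (fun k => F (u (φ (ψ k)))) Filter.atTop (nhds (F a)) := by
    apply (hF a ha).tendsto.comp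
    rw [tendsto_nhdsWithin_iff]
    exact ⟨hta', Filter.Eventually.of_forall (fun k => hu (φ (ψ k)))⟩
  have hFb : Filter.Tendsto (fun k => F (v (φ (ψ k)))) Filter.atTop (nhds (F b)) := by
    apply (hF b hb).tendsto.comp
    rw [tendsto_nhdsWithin_iff]
    exact ⟨htb, Filter.Eventually.of_forall (fun k => hv (φ (ψ k)))⟩
  have hdd : Filter.Tendsto (fun k => dist (F (u (φ (ψ k)))) (F (v (φ (ψ k))))) Filter.atTop
      (nhds (dist (F a) (F b))) := hFa.dist hFb
  have hge : ε ≤ dist (F a) (F b) := by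
    apply ge_of_tendsto hdd
    filter_upwards with k
    exact (hdist (φ (ψ k))).le
  rw [hab, dist_self] at hge
  linarith

end Dynamics
set_option maxHeartbeats 3000000 in
/-- Lemma `L4`: if `L((x'_i))` has at least two points and `f` is a
conjugacy between the Oxtoby systems of `z` and `z'`, then there is `i₀` such that for
all `i ≥ i₀`, `k ∈ ℤ`, `j > i`: `[k p_i,(k+1) p_i) ⊆ Per_{p_j}(z)` implies
`[k p_i,(k+1) p_i) ⊆ Per_{p_j}(f(z))`. -/
theorem oxtoby_conjugacy_periodic_blocks {X : Type*} [MetricSpace X] [CompactSpace X]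
    (x x' : ℕ → X) (p : ℕ → ℕ) (hp : FastGrowing p)
    (hL' : (omegaLimitSet x').Nontrivial)
    (f : (ℤ → X) → (ℤ → X))
    (hf : IsConjugacy (orbitClosure (oxtoby p x)) (orbitClosure (oxtoby p x')) f) :
    ∃ i₀ : ℕ, ∀ i : ℕ, i₀ ≤ i → ∀ k : ℤ, ∀ j : ℕ, i < j →
      Set.Ico (k * (p i : ℤ)) ((k + 1) * (p i : ℤ)) ⊆ PerSet (p j) (oxtoby p x) →
      Set.Ico (k * (p i : ℤ)) ((k + 1) * (p i : ℤ)) ⊆ PerSet (p j) (f (oxtoby p x)) := by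
  classical
  set z := oxtoby p x with hzdef
  set z' := oxtoby p x' with hz'def
  obtain ⟨a, ⟨φa, hφa, hta⟩, b, ⟨φb, hφb, htb⟩, hab⟩ := hL'
  set ε : ℝ := dist a b / 3 with hεdef
  have hεpos : 0 < ε := by
    have : 0 < dist a b := dist_pos.mpr hab
    positivity
  obtain ⟨hfm, hfc, ⟨g, hgm, hgc, hgf, hfg⟩, hcomm⟩ := hf
  have hf' : IsConjugacy (orbitClosure z) (orbitClosure z') f :=
    ⟨hfm, hfc, ⟨g, hgm, hgc, hgf, hfg⟩, hcomm⟩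
  set w := f z with hwdef
  have hzA : z ∈ orbitClosure z := self_mem_orbitClosure z
  have hz'B : z' ∈ orbitClosure z' := self_mem_orbitClosure z'
  have hwB : w ∈ orbitClosure z' := hfm hzA
  have hshiftw : ∀ (m : ℤ), f (shiftZ m z) = shiftZ m w :=
    fun m => conj_shift_comm hf' m z hzA
  -- limit-point contradiction machine
  have hlim : ∀ (c : X) (l : ℕ), (∀ μ : ℕ, l < μ → dist c (x' μ) ≤ ε) → False := by
    intro c l hc
    have hball : ∀ (φ : ℕ → ℕ) (q : X), StrictMono φ →
        Filter.Tendsto (x' ∘ φ) Filter.atTop (nhds q) → q ∈ Metric.closedBall c ε := by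
      intro φ q hφ htq
      have hclosed : IsClosed (Metric.closedBall c ε) := Metric.isClosed_closedBall
      apply hclosed.mem_of_tendsto htq
      filter_upwards [Filter.eventually_ge_atTop (l+1)] with s hs
      have h1 : l < φ s := by
        have h2 : s ≤ φ s := hφ.id_le s
        omega
      rw [Metric.mem_closedBall, dist_comm]
      exact hc (φ s) h1
    have ha' := hball φa a hφa hta
    have hb' := hball φb b hφb htb
    rw [Metric.mem_closedBall] at ha' hb'
    have h3 : dist a b ≤ dist a c + dist c b := dist_triangle a c b
    rw [dist_comm c b] at h3
    have h4 : dist a b ≤ 2 * ε := by linarith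
    rw [hεdef] at h4
    have h5 : 0 < dist a b := dist_pos.mpr hab
    linarith
  -- window code
  obtain ⟨N, hN⟩ := window_code (isClosed_closure (s := {y : ℤ → X | ∃ m : ℤ, y = shiftZ m z}))
    ((continuous_apply (0:ℤ)).comp_continuousOn hfc) hεpos
  -- phase of w
  obtain ⟨ρ, hρcompat, hρval⟩ : ∃ ρ : ℕ → ℤ, (∀ i j : ℕ, i ≤ j → (p i:ℤ) ∣ ρ j - ρ i) ∧
      (∀ (lam : ℕ) (n : ℤ), n + ρ lam ∈ oxDefined p lam → w n = z' (n + ρ lam)) := by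
    obtain ⟨y, hyO, hyw⟩ := mem_closure_iff_seq_limit.mp hwB
    choose msh hmsh using hyO
    set U : Ultrafilter ℕ := Ultrafilter.of Filter.atTop with hUdef
    have hU : (U : Filter ℕ) ≤ Filter.atTop := Ultrafilter.of_le _
    have hres : ∀ lam : ℕ, ∃ r : ℤ, {t | msh t % ((p lam : ℕ) : ℤ) = r} ∈ U := by
      intro lam
      have hplam : (0:ℤ) < ((p lam : ℕ) : ℤ) := by exact_mod_cast hp.pos lam
      have hfin : (Set.Icc (0:ℤ) (((p lam : ℕ) : ℤ) - 1)).Finite := Set.finite_Icc _ _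
      have hmemIcc : Set.Icc (0:ℤ) (((p lam : ℕ) : ℤ) - 1) ∈ U.map (fun t => msh t % ((p lam : ℕ) : ℤ)) := by
        apply Filter.mem_map.mpr
        apply Filter.univ_mem'
        intro t
        simp only [Set.mem_preimage, Set.mem_Icc]
        constructor
        · exact Int.emod_nonneg _ (by positivity)
        · have := Int.emod_lt_of_pos (msh t) hplam
          omega
      obtain ⟨r, _, hpure⟩ := Ultrafilter.eq_pure_of_finite_mem hfin hmemIcc
      refine ⟨r, ?_⟩
      have : {r} ∈ U.map (fun t => msh t % ((p lam : ℕ) : ℤ)) := by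
        rw [hpure]; exact Filter.mem_pure.mpr rfl
      exact Filter.mem_map.mp this
    choose ρ hρU using hres
    have hdvd_m : ∀ (lam : ℕ) (t : ℕ), msh t % ((p lam:ℕ):ℤ) = ρ lam →
        ((p lam : ℕ) : ℤ) ∣ msh t - ρ lam := by
      intro lam t ht
      refine ⟨msh t / ((p lam:ℕ):ℤ), ?_⟩
      rw [← ht, Int.emod_def]
      ring
    refine ⟨ρ, ?_, ?_⟩
    · intro i j hij
      have hmem : ({t | msh t % ((p i:ℕ):ℤ) = ρ i} ∩ {t | msh t % ((p j:ℕ):ℤ) = ρ j}) ∈ U :=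
        Filter.inter_mem (hρU i) (hρU j)
      obtain ⟨t, ht1, ht2⟩ := Filter.nonempty_of_mem hmem
      have h1 := hdvd_m i t ht1
      have h2 := (hp.dvdZ hij).trans (hdvd_m j t ht2)
      have h3 : ρ j - ρ i = (msh t - ρ i) - (msh t - ρ j) := by ring
      rw [h3]
      exact dvd_sub h1 h2
    · intro lam n hmem
      have hev : ∀ᶠ t in (U : Filter ℕ), y t n = z' (n + ρ lam) := by
        filter_upwards [hρU lam] with t ht
        have h1 : y t n = z' (n + msh t) := by rw [hmsh t]; rfl
        rw [h1]
        apply oxDefined_subset_perSet hp x' lam hmem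
        have h2 : (n + msh t) - (n + ρ lam) = msh t - ρ lam := by ring
        rw [h2]
        exact hdvd_m lam t ht
      have h1 : Filter.Tendsto (fun t => y t n) (U : Filter ℕ) (nhds (w n)) :=
        (tendsto_pi_nhds.mp hyw n).mono_left hU
      have h2 : Filter.Tendsto (fun t => y t n) (U : Filter ℕ) (nhds (z' (n + ρ lam))) := by
        rw [Filter.tendsto_congr' hev]
        exact tendsto_const_nhds
      exact tendsto_nhds_unique h1 h2
  -- Lemma A : exact periods of z
  have hPerD : ∀ j : ℕ, PerSet (p j) z ⊆ oxDefined p j := by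
    intro j n hn
    by_contra hnD
    -- x is constant above level j+1
    have hx : ∀ ν : ℕ, j ≤ ν → x (ν+1) = z n := by
      intro ν hν
      obtain ⟨m, hmd, hm1, hm2⟩ := exists_level hp hν hnD
      have h1 : z m = x (ν+1) := oxtoby_apply x hm1 hm2
      have h2 : z m = z n := hn m hmd
      rw [← h1, h2]
    -- z is exactly p (j+1)-periodic
    have hper : shiftZ ((p (j+1) : ℕ) : ℤ) z = z := by
      funext n'
      show z (n' + ((p (j+1):ℕ):ℤ)) = z n'
      rw [hzdef]
      obtain ⟨ν', h1', h2'⟩ := exists_exact_level hp n'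
      rcases Nat.lt_or_ge ν' (j+1) with hcase | hcase
      · have hs1 : n' + ((p (j+1):ℕ):ℤ) ∈ oxDefined p (ν'+1) := by
          rw [oxDefined_shift hp (hp.dvdZ (by omega : ν'+1 ≤ j+1))]
          exact h1'
        have hs2 : n' + ((p (j+1):ℕ):ℤ) ∉ oxDefined p ν' := by
          rw [oxDefined_shift hp (hp.dvdZ (by omega : ν' ≤ j+1))]
          exact h2'
        rw [oxtoby_apply x hs1 hs2, oxtoby_apply x h1' h2']
      · have hd1 : n' ∉ oxDefined p (j+1) := fun hmem => h2' (oxDefined_mono _ (by omega) hmem)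
        have hd2 : n' + ((p (j+1):ℕ):ℤ) ∉ oxDefined p (j+1) := by
          rw [oxDefined_shift hp dvd_rfl]
          exact hd1
        obtain ⟨ν'', hn1'', hn2''⟩ := exists_exact_level hp (n' + ((p (j+1):ℕ):ℤ))
        have hν'' : j + 1 ≤ ν'' := by
          by_contra hcon
          push_neg at hcon
          exact hd2 (oxDefined_mono _ (by omega) hn1'')
        rw [oxtoby_apply x hn1'' hn2'', oxtoby_apply x h1' h2',
          hx ν'' (by omega), hx ν' (by omega)]
    -- every element of the orbit closure is p (j+1)-periodic
    have hAper : ∀ u ∈ orbitClosure z, shiftZ ((p (j+1):ℕ):ℤ) u = u := by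
      have horb : ∀ u ∈ {y : ℤ → X | ∃ m : ℤ, y = shiftZ m z},
          u ∈ {u : ℤ → X | shiftZ ((p (j+1):ℕ):ℤ) u = u} := by
        rintro u ⟨m, rfl⟩
        show shiftZ ((p (j+1):ℕ):ℤ) (shiftZ m z) = shiftZ m z
        rw [shiftZ_comp, add_comm, ← shiftZ_comp, hper]
      have hclosed : IsClosed {u : ℤ → X | shiftZ ((p (j+1):ℕ):ℤ) u = u} :=
        isClosed_eq (continuous_shiftZ _) continuous_id
      intro u hu
      exact (closure_minimal horb hclosed) hu
    -- transfer to z'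
    have hz'per : shiftZ ((p (j+1):ℕ):ℤ) z' = z' := by
      have hA1 : g z' ∈ orbitClosure z := hgm hz'B
      have hgper := hAper (g z') hA1
      calc shiftZ ((p (j+1):ℕ):ℤ) z' = shiftZ ((p (j+1):ℕ):ℤ) (f (g z')) := by rw [hfg z' hz'B]
      _ = f (shiftZ ((p (j+1):ℕ):ℤ) (g z')) := (conj_shift_comm hf' _ _ hA1).symm
      _ = f (g z') := by rw [hgper]
      _ = z' := hfg z' hz'B
    -- x' is constant above level j+2
    have hrnot : (oxS p (j+1)) ∉ oxDefined p (j+1) := oxS_not_mem hp (j+1)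
    have hx' : ∀ ν : ℕ, j + 1 ≤ ν → x' (ν+1) = z' (oxS p (j+1)) := by
      intro ν hν
      obtain ⟨m, hmd, hm1, hm2⟩ := exists_level hp hν hrnot
      have h1 : z' m = x' (ν+1) := oxtoby_apply x' hm1 hm2
      have h2 : z' m = z' (oxS p (j+1)) := periodic_of_shift hz'per hmd
      rw [← h1, h2]
    -- contradiction with the two limit points
    apply hlim (z' (oxS p (j+1))) (j+1)
    intro μ hμ
    obtain ⟨ν, rfl⟩ : ∃ ν, μ = ν + 1 := ⟨μ - 1, by omega⟩
    rw [hx' ν (by omega), dist_self]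
    linarith
  -- dagger : deep windows are defined for w
  have hdag : ∀ (l : ℕ) (m : ℤ), (∀ n : ℤ, m - N ≤ n → n ≤ m + N → n ∈ oxDefined p l) →
      m + ρ l ∈ oxDefined p l := by
    intro l m hwin
    by_contra hhole
    apply hlim (w m) l
    intro μ hμ
    obtain ⟨ν, rfl⟩ : ∃ ν, μ = ν + 1 := ⟨μ - 1, by omega⟩
    have hν : l ≤ ν := by omega
    have hcompat : (p l : ℤ) ∣ ρ (ν+1) - ρ l := hρcompat l (ν+1) (by omega)
    have hrD : m + ρ (ν+1) ∉ oxDefined p l := by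
      intro hmem
      apply hhole
      have h1 : m + ρ l = (m + ρ (ν+1)) + (ρ l - ρ (ν+1)) := by ring
      rw [h1, oxDefined_shift hp (by simpa using hcompat.neg_right : (p l:ℤ) ∣ ρ l - ρ (ν+1))]
      exact hmem
    obtain ⟨mt, hmtd, hmt1, hmt2⟩ := exists_level hp hν hrD
    set d : ℤ := mt - (m + ρ (ν+1)) with hddef
    have hdvd : (p l : ℤ) ∣ d := hmtd
    have hagree : ∀ n : ℤ, |n| ≤ (N:ℤ) → shiftZ m z n = shiftZ (m + d) z n := by
      intro n hn
      rw [abs_le] at hn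
      show z (n + m) = z (n + (m + d))
      have hmem : n + m ∈ oxDefined p l := hwin (n + m) (by omega) (by omega)
      have := oxDefined_subset_perSet hp x l hmem (n + (m + d))
        (by simpa using hdvd : (p l:ℤ) ∣ (n + (m + d)) - (n + m))
      exact this.symm
    have hdist := hN _ (shiftZ_mem_orbitClosure m hzA) _ (shiftZ_mem_orbitClosure (m+d) hzA) hagree
    have e0 : ((fun q : ℤ → X => q 0) ∘ f) (shiftZ m z) = w m := by
      show f (shiftZ m z) 0 = w m
      rw [hshiftw m]
      show w (0 + m) = w m
      rw [zero_add]
    have e0' : ((fun q : ℤ → X => q 0) ∘ f) (shiftZ (m+d) z) = w (m + d) := by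
      show f (shiftZ (m+d) z) 0 = w (m+d)
      rw [hshiftw (m+d)]
      show w (0 + (m+d)) = w (m+d)
      rw [zero_add]
    rw [e0, e0'] at hdist
    have hph : w (m + d) = z' mt := by
      have h1 : m + d + ρ (ν+1) = mt := by rw [hddef]; ring
      have := hρval (ν+1) (m + d) (by rw [h1]; exact hmt1)
      rw [h1] at this
      exact this
    have hval : z' mt = x' (ν+1) := oxtoby_apply x' hmt1 hmt2
    rw [hph, hval] at hdist
    exact hdist
  -- integrality of the phase
  obtain ⟨Λ, c, hcbound, hcph⟩ : ∃ (Λ : ℕ) (c : ℤ), |c| ≤ (N:ℤ) + 1 ∧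
      ∀ lam : ℕ, Λ ≤ lam → (p lam : ℤ) ∣ ρ lam - c := by
    have hstep : ∀ κ : ℕ, 2*(N:ℤ) + 2 < (p κ : ℤ) →
        ∃ d : ℤ, (p (κ+1):ℤ) ∣ ρ (κ+2) - d ∧ |d| ≤ (N:ℤ) + 1 := by
      intro κ hκ
      have hP1pos : (0:ℤ) < (p (κ+1):ℤ) := by exact_mod_cast hp.pos (κ+1)
      have hP2pos : (0:ℤ) < (p (κ+2):ℤ) := by exact_mod_cast hp.pos (κ+2)
      have hrat1 : (3:ℤ) * (p κ:ℤ) ≤ (p (κ+1):ℤ) := by exact_mod_cast hp.ratio κ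
      have hrat2 : (3:ℤ) * (p (κ+1):ℤ) ≤ (p (κ+2):ℤ) := by exact_mod_cast hp.ratio (κ+1)
      have hS1eq : oxS p (κ+1) = oxS p κ + (p κ:ℤ) := oxS_succ κ
      have hS2eq : oxS p (κ+2) = oxS p (κ+1) + (p (κ+1):ℤ) := oxS_succ (κ+1)
      have hSκ0 : 0 ≤ oxS p κ := oxS_nonneg κ
      have hSκlt : 2 * oxS p κ < (p κ:ℤ) := two_oxS_lt hp κ
      set R : ℤ := oxS p (κ+1) - N - 1 with hRdef
      have hRpos : 0 < R := by omega
      have hrun : ∀ e : ℤ, 0 ≤ e → e ≤ 2 → ∃ (μ : ℕ) (mc : ℤ), (κ+1 ≤ μ) ∧ (μ ≤ κ+2) ∧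
          ((p μ:ℤ) ∣ mc) ∧ mc - oxS p μ ≤ e * (p (κ+1):ℤ) - R + ρ (κ+2) ∧
          e * (p (κ+1):ℤ) + R + ρ (κ+2) < mc + oxS p μ := by
        intro e he0 he2
        have hsub : ∀ m', e * (p (κ+1):ℤ) - R ≤ m' → m' ≤ e * (p (κ+1):ℤ) + R →
            m' + ρ (κ+2) ∈ oxDefined p (κ+2) := by
          intro m' h1 h2
          apply hdag (κ+2) m'
          intro n hn1 hn2
          exact run_subset hp (κ+1) (by omega) (⟨e, mul_comm _ _⟩ : (p (κ+1):ℤ) ∣ e * (p (κ+1):ℤ))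
            (by linarith) (by linarith)
        obtain ⟨μ, mc, hμ1, hμ2, hmcd, hg1, hg2⟩ := interval_in_run hp (κ+2)
          (e * (p (κ+1):ℤ) - R + ρ (κ+2)) (e * (p (κ+1):ℤ) + R + ρ (κ+2)) (by linarith)
          (fun n hn1 hn2 => by
            have h3 : n = (n - ρ (κ+2)) + ρ (κ+2) := by ring
            rw [h3]
            exact hsub (n - ρ (κ+2)) (by linarith) (by linarith))
        have hμκ : κ + 1 ≤ μ := by
          by_contra hcon
          push_neg at hcon
          have h1 : oxS p μ ≤ oxS p κ := oxS_mono hp (by omega)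
          linarith
        exact ⟨μ, mc, hμκ, hμ2, hmcd, hg1, hg2⟩
      have hwin1 : ∀ (e mc : ℤ), ((p (κ+1):ℤ) ∣ mc) →
          mc - oxS p (κ+1) ≤ e * (p (κ+1):ℤ) - R + ρ (κ+2) →
          e * (p (κ+1):ℤ) + R + ρ (κ+2) < mc + oxS p (κ+1) →
          ∃ d : ℤ, (p (κ+1):ℤ) ∣ ρ (κ+2) - d ∧ |d| ≤ (N:ℤ) + 1 := by
        intro e mc hdv h1 h2
        refine ⟨e * (p (κ+1):ℤ) + ρ (κ+2) - mc, ?_, ?_⟩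
        · have heq : ρ (κ+2) - (e * (p (κ+1):ℤ) + ρ (κ+2) - mc) = mc - e * (p (κ+1):ℤ) := by
            ring
          rw [heq]
          exact dvd_sub hdv ⟨e, mul_comm _ _⟩
        · rw [abs_le]
          constructor
          · linarith
          · linarith
      obtain ⟨μ0, mc0, hμ01, hμ02, hdv0, hg01, hg02⟩ := hrun 0 (by norm_num) (by norm_num)
      obtain ⟨μ1, mc1, hμ11, hμ12, hdv1, hg11, hg12⟩ := hrun 1 (by norm_num) (by norm_num)
      obtain ⟨μ2, mc2, hμ21, hμ22, hdv2, hg21, hg22⟩ := hrun 2 (by norm_num) (by norm_num)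
      rcases (by omega : μ0 = κ+1 ∨ μ0 = κ+2) with hμ0eq | hμ0eq
      · subst hμ0eq
        exact hwin1 0 mc0 hdv0 hg01 hg02
      rcases (by omega : μ1 = κ+1 ∨ μ1 = κ+2) with hμ1eq | hμ1eq
      · subst hμ1eq
        exact hwin1 1 mc1 hdv1 hg11 hg12
      rcases (by omega : μ2 = κ+1 ∨ μ2 = κ+2) with hμ2eq | hμ2eq
      · subst hμ2eq
        exact hwin1 2 mc2 hdv2 hg21 hg22
      subst hμ0eq; subst hμ1eq; subst hμ2eq
      -- all three runs have scale κ+2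
      have hP12 : (p (κ+1):ℤ) ∣ (p (κ+2):ℤ) := hp.dvdZ (by omega)
      obtain ⟨t01, ht01⟩ := dvd_sub hdv1 hdv0
      obtain ⟨t12, ht12⟩ := dvd_sub hdv2 hdv1
      rw [zero_mul] at hg01 hg02
      rw [one_mul] at hg11 hg12
      have ht01cases : t01 = 0 ∨ t01 = 1 := by
        rcases lt_trichotomy t01 0 with h | h | h
        · exfalso
          have hle : t01 ≤ -1 := by omega
          have : (p (κ+2):ℤ) * t01 ≤ (p (κ+2):ℤ) * (-1) :=
            mul_le_mul_of_nonneg_left hle hP2pos.le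
          linarith
        · left; exact h
        · rcases lt_or_ge t01 2 with h2 | h2
          · right; omega
          · exfalso
            have : (p (κ+2):ℤ) * 2 ≤ (p (κ+2):ℤ) * t01 :=
              mul_le_mul_of_nonneg_left h2 hP2pos.le
            linarith
      have ht12cases : t12 = 0 ∨ t12 = 1 := by
        rcases lt_trichotomy t12 0 with h | h | h
        · exfalso
          have hle : t12 ≤ -1 := by omega
          have : (p (κ+2):ℤ) * t12 ≤ (p (κ+2):ℤ) * (-1) :=
            mul_le_mul_of_nonneg_left hle hP2pos.le
          linarith
        · left; exact h
        · rcases lt_or_ge t12 2 with h2 | h2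
          · right; omega
          · exfalso
            have : (p (κ+2):ℤ) * 2 ≤ (p (κ+2):ℤ) * t12 :=
              mul_le_mul_of_nonneg_left h2 hP2pos.le
            linarith
      have hmc0P1 : (p (κ+1):ℤ) ∣ mc0 := hP12.trans hdv0
      have hmc1P1 : (p (κ+1):ℤ) ∣ mc1 := hP12.trans hdv1
      rcases ht01cases with ht0 | ht0
      · rcases ht12cases with ht1 | ht1
        · -- t01 = 0, t12 = 0 : mc2 = mc1 = mc0
          rw [ht0, mul_zero] at ht01
          rw [ht1, mul_zero] at ht12
          refine ⟨ρ (κ+2) - mc0 + (p (κ+1):ℤ), ?_, ?_⟩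
          · have heq : ρ (κ+2) - (ρ (κ+2) - mc0 + (p (κ+1):ℤ)) = mc0 - (p (κ+1):ℤ) := by ring
            rw [heq]
            exact dvd_sub hmc0P1 dvd_rfl
          · rw [abs_le]
            constructor
            · linarith
            · -- use e = 2 upper info : mc2 = mc0
              have hmc2 : mc2 = mc0 := by omega
              rw [hmc2] at hg22
              linarith
        · -- t01 = 0, t12 = 1 : mc2 = mc1 + P2
          rw [ht0, mul_zero] at ht01
          rw [ht1, mul_one] at ht12
          refine ⟨ρ (κ+2) - mc1, ?_, ?_⟩
          · have heq : ρ (κ+2) - (ρ (κ+2) - mc1) = mc1 := by ring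
            rw [heq]
            exact hmc1P1
          · rw [abs_le]
            constructor
            · -- lower from e = 2 bound
              have hmc2 : mc2 = mc1 + (p (κ+2):ℤ) := by omega
              rw [hmc2] at hg21
              linarith
            · linarith
      · -- t01 = 1 : mc1 = mc0 + P2
        rw [ht0, mul_one] at ht01
        refine ⟨ρ (κ+2) - mc0 - (p (κ+1):ℤ), ?_, ?_⟩
        · have heq : ρ (κ+2) - (ρ (κ+2) - mc0 - (p (κ+1):ℤ)) = mc0 + (p (κ+1):ℤ) := by ring
          rw [heq]
          exact dvd_add hmc0P1 dvd_rfl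
        · have hmc1 : mc1 = mc0 + (p (κ+2):ℤ) := by omega
          rw [hmc1] at hg11 hg12
          rw [abs_le]
          constructor
          · linarith
          · linarith
    -- gluing
    have hglue : ∀ lam : ℕ, 2*N + 3 ≤ lam →
        ∃ d : ℤ, (p lam : ℤ) ∣ ρ lam - d ∧ |d| ≤ (N:ℤ)+1 := by
      intro lam hlam
      obtain ⟨κ, rfl⟩ : ∃ κ, lam = κ + 1 := ⟨lam - 1, by omega⟩
      have hκval : 2*(N:ℤ) + 2 < (p κ : ℤ) := by
        have h1 : (κ:ℤ) + 1 ≤ (p κ:ℤ) := by exact_mod_cast hp.lin_le κ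
        have h2 : 2*N + 2 ≤ κ := by omega
        have h3 : (2*(N:ℤ) + 2) ≤ (κ:ℤ) := by exact_mod_cast h2
        omega
      obtain ⟨d, hd1, hd2⟩ := hstep κ hκval
      refine ⟨d, ?_, hd2⟩
      have hc2 : (p (κ+1):ℤ) ∣ ρ (κ+2) - ρ (κ+1) := hρcompat (κ+1) (κ+2) (by omega)
      have heq : ρ (κ+1) - d = (ρ (κ+2) - d) - (ρ (κ+2) - ρ (κ+1)) := by ring
      rw [heq]
      exact dvd_sub hd1 hc2
    obtain ⟨c, hc1, hc2⟩ := hglue (2*N+3) le_rfl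
    refine ⟨2*N+3, c, hc2, ?_⟩
    intro lam hlam
    induction lam, hlam using Nat.le_induction with
    | base => exact hc1
    | succ lam hlam ih =>
      obtain ⟨d', hd'1, hd'2⟩ := hglue (lam+1) (by omega)
      have h1 : (p lam:ℤ) ∣ ρ (lam+1) - ρ lam := hρcompat lam (lam+1) (by omega)
      have h2 : (p lam:ℤ) ∣ ρ (lam+1) - c := by
        have heq : ρ (lam+1) - c = (ρ (lam+1) - ρ lam) + (ρ lam - c) := by ring
        rw [heq]
        exact dvd_add h1 ih
      have h3 : (p lam:ℤ) ∣ ρ (lam+1) - d' := (hp.dvdZ (by omega : lam ≤ lam+1)).trans hd'1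
      have h4 : (p lam:ℤ) ∣ d' - c := by
        have heq : d' - c = (ρ (lam+1) - c) - (ρ (lam+1) - d') := by ring
        rw [heq]
        exact dvd_sub h2 h3
      have hplam : 2*(N:ℤ) + 2 < (p lam:ℤ) := by
        have ha1 : (lam:ℤ) + 1 ≤ (p lam:ℤ) := by exact_mod_cast hp.lin_le lam
        have ha2 : 2*N + 3 ≤ lam := hlam
        have ha3 : (2*(N:ℤ) + 3) ≤ (lam:ℤ) := by exact_mod_cast ha2
        omega
      have habs1 := abs_le.mp hd'2
      have habs2 := abs_le.mp hc2
      have hd'c : d' = c := by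
        obtain ⟨t, ht⟩ := h4
        have hppos : (0:ℤ) < (p lam:ℤ) := by exact_mod_cast hp.pos lam
        rcases lt_trichotomy t 0 with h | h | h
        · exfalso
          have hle : t ≤ -1 := by omega
          have : (p lam:ℤ) * t ≤ (p lam:ℤ) * (-1) := mul_le_mul_of_nonneg_left hle hppos.le
          linarith
        · rw [h, mul_zero] at ht
          omega
        · exfalso
          have hle : 1 ≤ t := by omega
          have : (p lam:ℤ) * 1 ≤ (p lam:ℤ) * t := mul_le_mul_of_nonneg_left hle hppos.le
          linarith
      rw [← hd'c]
      exact hd'1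
  -- assembly
  refine ⟨Λ + N + 2, ?_⟩
  intro i hi k j hij hprem
  intro n hn
  rw [Set.mem_Ico] at hn
  obtain ⟨hn1, hn2⟩ := hn
  have hpi_pos : (0:ℤ) < (p i : ℤ) := by exact_mod_cast hp.pos i
  have hint : ∀ n', k * (p i:ℤ) ≤ n' → n' ≤ (k+1) * (p i:ℤ) - 1 → n' ∈ oxDefined p j := by
    intro n' h1 h2
    exact hPerD j (hprem (Set.mem_Ico.mpr ⟨h1, by omega⟩))
  obtain ⟨μ, m, hμ1, hμ2, hmd, hr1, hr2⟩ := interval_in_run hp j (k * (p i:ℤ))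
    ((k+1) * (p i:ℤ) - 1) (by nlinarith) hint
  have hμi : i + 1 ≤ μ := by
    by_contra hcon
    push_neg at hcon
    have h2S : oxS p μ ≤ oxS p i := oxS_mono hp (by omega)
    have h2Si := two_oxS_lt hp i
    nlinarith
  have hSmod : (p i:ℤ) ∣ oxS p μ - oxS p i := dvd_oxS_sub hp (by omega)
  have hpiμ : (p i : ℤ) ∣ m := (hp.dvdZ (by omega : i ≤ μ)).trans hmd
  have hSi0 : 0 ≤ oxS p i := oxS_nonneg i
  have hSilt : 2 * oxS p i < (p i:ℤ) := two_oxS_lt hp i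
  have hA1 : oxS p i ≤ k * (p i:ℤ) - m + oxS p μ := by
    have hdv : (p i:ℤ) ∣ (k * (p i:ℤ) - m + oxS p μ) - oxS p i := by
      have h1 : (k * (p i:ℤ) - m + oxS p μ) - oxS p i
          = k * (p i:ℤ) - m + (oxS p μ - oxS p i) := by ring
      rw [h1]
      exact dvd_add (dvd_sub ⟨k, mul_comm _ _⟩ hpiμ) hSmod
    obtain ⟨t, ht⟩ := hdv
    have h0 : 0 ≤ k * (p i:ℤ) - m + oxS p μ := by linarith
    rcases le_or_gt 0 t with h | h
    · nlinarith
    · nlinarith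
  have hA2 : oxS p i ≤ m + oxS p μ - (k+1) * (p i:ℤ) := by
    have hdv : (p i:ℤ) ∣ (m + oxS p μ - (k+1) * (p i:ℤ)) - oxS p i := by
      have h1 : (m + oxS p μ - (k+1) * (p i:ℤ)) - oxS p i
          = m - (k+1) * (p i:ℤ) + (oxS p μ - oxS p i) := by ring
      rw [h1]
      exact dvd_add (dvd_sub hpiμ ⟨k+1, mul_comm _ _⟩) hSmod
    obtain ⟨t, ht⟩ := hdv
    have h0 : 0 ≤ m + oxS p μ - (k+1) * (p i:ℤ) := by linarith
    rcases le_or_gt 0 t with h | h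
    · nlinarith
    · nlinarith
  -- S_i ≥ N + 2
  have hSiN : (N:ℤ) + 2 ≤ oxS p i := by
    have hi1 : 1 ≤ i := by omega
    obtain ⟨i', rfl⟩ : ∃ i', i = i' + 1 := ⟨i - 1, by omega⟩
    have h1 : ((i':ℕ):ℤ) + 1 ≤ (p i' : ℤ) := by exact_mod_cast hp.lin_le i'
    have h2 : oxS p i' + (p i' : ℤ) = oxS p (i'+1) := (oxS_succ i').symm
    have h3 : 0 ≤ oxS p i' := oxS_nonneg i'
    have h4 : (N:ℤ) + 1 ≤ (i' : ℤ) := by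
      have : Λ + N + 2 ≤ i' + 1 := hi
      push_cast; omega
    omega
  have hjΛ : Λ ≤ j := by omega
  have hcj : (p j : ℤ) ∣ ρ j - c := hcph j hjΛ
  have habs := abs_le.mp hcbound
  -- n + c ∈ D_j
  have hnc : n + c ∈ oxDefined p j := by
    apply run_subset hp μ hμ2 hmd (n := n + c) (by linarith) (by linarith)
  -- n + ρ j ∈ D_j
  have hnρ : n + ρ j ∈ oxDefined p j := by
    have h1 : n + ρ j = (n + c) + (ρ j - c) := by ring
    rw [h1, oxDefined_shift hp hcj]
    exact hnc
  -- conclusion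
  intro m' hm'
  have hm'ρ : m' + ρ j ∈ oxDefined p j := by
    have h1 : m' + ρ j = (n + ρ j) + (m' - n) := by ring
    rw [h1, oxDefined_shift hp hm']
    exact hnρ
  have e1 : w m' = z' (m' + ρ j) := hρval j m' hm'ρ
  have e2 : w n = z' (n + ρ j) := hρval j n hnρ
  have e3 : z' (m' + ρ j) = z' (n + ρ j) := by
    apply oxDefined_subset_perSet hp x' j hnρ
    have : (m' + ρ j) - (n + ρ j) = m' - n := by ring
    rw [this]; exact hm'
  show w m' = w n
  rw [e1, e2, e3]
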